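/- Let n ≥ 1, let λ be a partition with l(λ) = n, and let μ ⊆ λ be a partition with l(μ) = n−1. Then the following identity holds in ℤ[t]: Σ_β φ_{λ/β}(t²) · t^{2(|β|−|μ|)} · sk_{β/μ}(t²) = t² · sk_{λ/μ}(t²), where the sum is over all partitions β with μ ⊆ β, β ≼ λ (i.e. λ/β is a horizontal strip), and l(β) = n. -/

import Mathlib

open scoped BigOperators Classical

namespace EK

/-- Conjugate partition: `conj f j = #{i : f i ≥ j}` (parts of `f` are `f 0, f 1, …`,
i.e. `f i = λ_{i+1}`). -/
noncomputable def conj (f : ℕ → ℕ) (j : ℕ) : ℕ := Nat.card {i : ℕ // j ≤ f i}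

/-- `f` represents a partition: weakly decreasing with finitely many nonzero parts. -/
def IsPartition (f : ℕ → ℕ) : Prop := Antitone f ∧ ∃ N, ∀ i, N ≤ i → f i = 0

/-- `l(f) = n`: the first `n` parts are positive, the rest vanish. -/
def HasLength (f : ℕ → ℕ) (n : ℕ) : Prop := (∀ i < n, 0 < f i) ∧ ∀ i, n ≤ i → f i = 0

/-- `|λ| = Σ_i λ_i`. -/
noncomputable def psize (f : ℕ → ℕ) : ℕ := ∑ᶠ i, f i

/-- `n(λ) = Σ_{i ≥ 1} (i-1) λ_i` (0-indexed: `Σ_i i * f i`). -/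
noncomputable def nstat (f : ℕ → ℕ) : ℕ := ∑ᶠ i, i * f i

/-- `φ_r(u) = ∏_{i=1}^r (1 - u^i)`. -/
def phiPoch {F : Type*} [Field F] (u : F) (r : ℕ) : F := ∏ i ∈ Finset.Icc 1 r, (1 - u ^ i)

/-- Gaussian binomial `binom(a,b)_u = φ_a(u)/(φ_b(u) φ_{a-b}(u))` for `0 ≤ b ≤ a`, `0` otherwise. -/
noncomputable def gauss {F : Type*} [Field F] (u : F) (a b : ℤ) : F :=
  if 0 ≤ b ∧ b ≤ a then phiPoch u a.toNat / (phiPoch u b.toNat * phiPoch u (a - b).toNat)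
  else 0

/-- `sk_{λ/μ}(u) = u^{Σ_{j≥1} C(λ'_j - μ'_j, 2)} ∏_{j≥1} binom(λ'_j - μ'_{j+1}, m_j(μ))_u`
(the factors for `j > λ_1` are all `1` and the exponents vanish there, so the product and
sum are taken over `1 ≤ j ≤ λ_1 = f 0`). -/
noncomputable def sk {F : Type*} [Field F] (u : F) (f g : ℕ → ℕ) : F :=
  u ^ (∑ j ∈ Finset.Icc 1 (f 0), Nat.choose (conj f j - conj g j) 2) *
    ∏ j ∈ Finset.Icc 1 (f 0),
      gauss u ((conj f j : ℤ) - (conj g (j + 1) : ℤ)) ((conj g j : ℤ) - (conj g (j + 1) : ℤ))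

/-- `μ ⊆ λ` and `λ/μ` is a horizontal strip, i.e. `λ'_j - μ'_j ∈ {0,1}` for all `j ≥ 1`. -/
def IsHStrip (f g : ℕ → ℕ) : Prop :=
  (∀ i, g i ≤ f i) ∧ ∀ j, 1 ≤ j → conj f j ≤ conj g j + 1

/-- `φ_{λ/μ}(u) = ∏_{j ≥ 1, λ'_j = μ'_j + 1, λ'_{j+1} = μ'_{j+1}} (1 - u^{m_j(λ)})` if `λ/μ` is
a horizontal strip, and `0` otherwise (factors with `j > λ_1` never occur). -/
noncomputable def phiStrip {F : Type*} [Field F] (u : F) (f g : ℕ → ℕ) : F :=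
  if IsHStrip f g then
    ∏ j ∈ (Finset.Icc 1 (f 0)).filter
        (fun j => conj f j = conj g j + 1 ∧ conj f (j + 1) = conj g (j + 1)),
      (1 - u ^ (conj f j - conj f (j + 1)))
  else 0

/-- `b_λ(u) = ∏_{i ≥ 1} φ_{m_i(λ)}(u)` (factors with `i > λ_1` are `1`). -/
noncomputable def bcoef {F : Type*} [Field F] (u : F) (f : ℕ → ℕ) : F :=
  ∏ i ∈ Finset.Icc 1 (f 0), phiPoch u (conj f i - conj f (i + 1))


/-! ### Helper lemmas -/

lemma downset_eq_range (s : Finset ℕ) (h : ∀ a b : ℕ, a ≤ b → b ∈ s → a ∈ s) :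
    s = Finset.range s.card := by
  have hsub : s ⊆ Finset.range s.card := by
    intro i hi
    have h1 : Finset.range (i + 1) ⊆ s := by
      intro k hk
      exact h k i (Nat.lt_succ_iff.mp (Finset.mem_range.mp hk)) hi
    have := Finset.card_le_card h1
    simpa using this
  exact Finset.eq_of_subset_of_card_le hsub (by simp)

lemma conj_lt_iff {f : ℕ → ℕ} (hf : Antitone f) {N : ℕ} (h0 : ∀ i, N ≤ i → f i = 0)
    {j : ℕ} (hj : 1 ≤ j) (i : ℕ) : i < conj f j ↔ j ≤ f i := by
  have hSN : {i : ℕ | j ≤ f i} ⊆ Set.Iio N := by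
    intro i hi
    by_contra hc
    have hz := h0 i (not_lt.mp hc)
    have hji : j ≤ f i := hi
    omega
  have hfin : ({i : ℕ | j ≤ f i}).Finite := (Set.finite_Iio N).subset hSN
  have hcard : conj f j = hfin.toFinset.card := by
    show Nat.card ({i : ℕ | j ≤ f i} : Set ℕ) = _
    rw [Nat.card_coe_set_eq, Set.ncard_eq_toFinset_card _ hfin]
  have hds : hfin.toFinset = Finset.range hfin.toFinset.card := by
    apply downset_eq_range
    intro a b hab hb
    simp only [Set.Finite.mem_toFinset, Set.mem_setOf_eq] at *
    exact le_trans hb (hf hab)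
  constructor
  · intro hi
    have : i ∈ hfin.toFinset := by rw [hds]; exact Finset.mem_range.mpr (hcard ▸ hi)
    simpa using this
  · intro hi
    have : i ∈ hfin.toFinset := by simpa using hi
    rw [hds] at this
    exact hcard ▸ Finset.mem_range.mp this

lemma conj_eq_of {f : ℕ → ℕ} (hf : Antitone f) {N : ℕ} (h0 : ∀ i, N ≤ i → f i = 0)
    {j : ℕ} (hj : 1 ≤ j) {k : ℕ} (hk : ∀ i, j ≤ f i ↔ i < k) : conj f j = k := by
  have h := fun i => (conj_lt_iff hf h0 hj i).trans (hk i)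
  by_contra hne
  rcases Nat.lt_or_ge (conj f j) k with h1 | h1
  · exact absurd ((h (conj f j)).mpr h1) (lt_irrefl _)
  · have h2 : k < conj f j := by omega
    exact absurd ((h k).mp h2) (lt_irrefl _)

lemma conj_le_bound {f : ℕ → ℕ} (hf : Antitone f) {N : ℕ} (h0 : ∀ i, N ≤ i → f i = 0)
    {j : ℕ} (hj : 1 ≤ j) : conj f j ≤ N := by
  by_contra hc
  have := (conj_lt_iff hf h0 hj N).mp (not_le.mp hc)
  rw [h0 N le_rfl] at this
  omega

lemma conj_eq_zero {f : ℕ → ℕ} (hf : Antitone f) {j : ℕ} (hj : f 0 < j) : conj f j = 0 := by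
  have : IsEmpty {i : ℕ // j ≤ f i} := by
    constructor; rintro ⟨i, hi⟩
    exact absurd (le_trans hi (hf (Nat.zero_le i))) (not_le.mpr hj)
  exact Nat.card_of_isEmpty

lemma conj_mono_f {f g : ℕ → ℕ} (hgf : ∀ i, g i ≤ f i) (hf : Antitone f)
    {N : ℕ} (h0 : ∀ i, N ≤ i → f i = 0) {j : ℕ} (hj : 1 ≤ j) : conj g j ≤ conj f j := by
  have hsub : {i : ℕ | j ≤ g i} ⊆ {i : ℕ | j ≤ f i} := fun i hi => le_trans hi (hgf i)
  have hSN : {i : ℕ | j ≤ f i} ⊆ Set.Iio N := by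
    intro i hi
    by_contra hc
    have hz := h0 i (not_lt.mp hc)
    have hji : j ≤ f i := hi
    omega
  have hfin : ({i : ℕ | j ≤ f i}).Finite := (Set.finite_Iio N).subset hSN
  exact Nat.card_mono hfin hsub

lemma conj_anti {f : ℕ → ℕ} (hf : Antitone f) {N : ℕ} (h0 : ∀ i, N ≤ i → f i = 0)
    {j j' : ℕ} (hj : 1 ≤ j) (hjj : j ≤ j') : conj f j' ≤ conj f j := by
  have hsub : {i : ℕ | j' ≤ f i} ⊆ {i : ℕ | j ≤ f i} := fun i hi => le_trans hjj hi
  have hSN : {i : ℕ | j ≤ f i} ⊆ Set.Iio N := by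
    intro i hi
    by_contra hc
    have hz := h0 i (not_lt.mp hc)
    have hji : j ≤ f i := hi
    omega
  have hfin : ({i : ℕ | j ≤ f i}).Finite := (Set.finite_Iio N).subset hSN
  exact Nat.card_mono hfin hsub

lemma conj_one {f : ℕ → ℕ} (hf : Antitone f) {n : ℕ} (hfl : HasLength f n) : conj f 1 = n := by
  apply conj_eq_of hf hfl.2 le_rfl
  intro i
  constructor
  · intro hi
    by_contra hc
    rw [hfl.2 i (not_lt.mp hc)] at hi; omega
  · intro hi
    exact hfl.1 i hi

lemma row_eq_card {f : ℕ → ℕ} (hf : Antitone f) {N : ℕ} (h0 : ∀ i, N ≤ i → f i = 0)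
    {M : ℕ} (hM : f 0 ≤ M) (i : ℕ) :
    f i = ((Finset.Icc 1 M).filter (fun j => i < conj f j)).card := by
  have h1 : ((Finset.Icc 1 M).filter (fun j => i < conj f j)) = Finset.Icc 1 (f i) := by
    ext k
    simp only [Finset.mem_filter, Finset.mem_Icc]
    constructor
    · rintro ⟨⟨hk1, hkM⟩, hk⟩
      exact ⟨hk1, (conj_lt_iff hf h0 hk1 i).mp hk⟩
    · rintro ⟨hk1, hk2⟩
      refine ⟨⟨hk1, le_trans hk2 (le_trans (hf (Nat.zero_le i)) hM)⟩, ?_⟩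
      exact (conj_lt_iff hf h0 hk1 i).mpr hk2
  rw [h1, Nat.card_Icc]
  omega

lemma psize_eq {f : ℕ → ℕ} (hf : Antitone f) {N : ℕ} (h0 : ∀ i, N ≤ i → f i = 0)
    {M : ℕ} (hM : f 0 ≤ M) : psize f = ∑ j ∈ Finset.Icc 1 M, conj f j := by
  have hsupp : (Function.support f) ⊆ ↑(Finset.range N) := by
    intro i hi
    simp only [Function.mem_support] at hi
    simp only [Finset.coe_range, Set.mem_Iio]
    by_contra hc
    exact hi (h0 i (not_lt.mp hc))
  rw [psize, finsum_eq_sum_of_support_subset f hsupp]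
  have : ∀ i ∈ Finset.range N, f i = ∑ j ∈ Finset.Icc 1 M, if i < conj f j then 1 else 0 := by
    intro i _
    rw [row_eq_card hf h0 hM i, Finset.card_filter]
  rw [Finset.sum_congr rfl this, Finset.sum_comm]
  apply Finset.sum_congr rfl
  intro j hj
  have hj1 : 1 ≤ j := (Finset.mem_Icc.mp hj).1
  have hcle : conj f j ≤ N := conj_le_bound hf h0 hj1
  rw [← Finset.card_filter]
  have : (Finset.range N).filter (fun i => i < conj f j) = Finset.range (conj f j) := by
    ext i
    simp only [Finset.mem_filter, Finset.mem_range]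
    omega
  rw [this, Finset.card_range]

lemma filter_Icc_downset (M : ℕ) (p : ℕ → Prop) [DecidablePred p]
    (hp : ∀ j k : ℕ, 1 ≤ j → j ≤ k → p k → p j) :
    (Finset.Icc 1 M).filter p = Finset.Icc 1 ((Finset.Icc 1 M).filter p).card := by
  have hsub : (Finset.Icc 1 M).filter p
      ⊆ Finset.Icc 1 ((Finset.Icc 1 M).filter p).card := by
    intro j hj
    obtain ⟨hm, hpj⟩ := Finset.mem_filter.mp hj
    obtain ⟨h1, h2⟩ := Finset.mem_Icc.mp hm
    refine Finset.mem_Icc.mpr ⟨h1, ?_⟩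
    have hIcc : Finset.Icc 1 j ⊆ (Finset.Icc 1 M).filter p := by
      intro k hk
      obtain ⟨hk1, hk2⟩ := Finset.mem_Icc.mp hk
      exact Finset.mem_filter.mpr ⟨Finset.mem_Icc.mpr ⟨hk1, le_trans hk2 h2⟩,
        hp k j hk1 hk2 hpj⟩
    have := Finset.card_le_card hIcc
    rw [Nat.card_Icc] at this
    omega
  apply Finset.eq_of_subset_of_card_le hsub
  rw [Nat.card_Icc]
  omega

lemma choose_step (m : ℕ) : m + Nat.choose m 2 = Nat.choose (m + 1) 2 := by
  rw [Nat.choose_succ_succ]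
  simp [Nat.choose_one_right, Nat.add_comm]

lemma one_sub_X2_pow_ne_zero (i : ℕ) (hi : 1 ≤ i) :
    (1 : RatFunc ℚ) - ((RatFunc.X : RatFunc ℚ) ^ 2) ^ i ≠ 0 := by
  have h1 : ((RatFunc.X : RatFunc ℚ) ^ 2) ^ i = RatFunc.X ^ (2 * i) := by rw [← pow_mul]
  rw [h1]
  intro h
  have h2 : (RatFunc.X : RatFunc ℚ) ^ (2 * i) = 1 := by linear_combination -h
  have h3 : (algebraMap (Polynomial ℚ) (RatFunc ℚ)) (Polynomial.X ^ (2 * i)) =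
      (algebraMap (Polynomial ℚ) (RatFunc ℚ)) 1 := by
    rw [map_pow, RatFunc.algebraMap_X, map_one, h2]
  have h4 := RatFunc.algebraMap_injective ℚ h3
  have h6 := congrArg Polynomial.natDegree h4
  simp [Polynomial.natDegree_X_pow] at h6
  omega

/-! ### Gaussian binomial lemmas -/

variable {F : Type*} [Field F] {u : F}

lemma phiPoch_zero : phiPoch u 0 = 1 := by simp [phiPoch]

lemma phiPoch_succ (r : ℕ) : phiPoch u (r + 1) = phiPoch u r * (1 - u ^ (r + 1)) := by
  rw [phiPoch, phiPoch, Finset.prod_Icc_succ_top (by omega)]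

lemma phiPoch_ne_zero (hu : ∀ i : ℕ, 1 ≤ i → (1 : F) - u ^ i ≠ 0) (r : ℕ) :
    phiPoch u r ≠ 0 := by
  apply Finset.prod_ne_zero_iff.mpr
  intro i hi
  exact hu i (Finset.mem_Icc.mp hi).1

lemma gauss_nat (A d : ℕ) (h : d ≤ A) :
    gauss u (A : ℤ) (d : ℤ) = phiPoch u A / (phiPoch u d * phiPoch u (A - d)) := by
  rw [gauss, if_pos ⟨Int.ofNat_nonneg d, by exact_mod_cast h⟩]
  have h1 : ((A : ℤ)).toNat = A := by omega
  have h2 : ((d : ℤ)).toNat = d := by omega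
  have h3 : ((A : ℤ) - (d : ℤ)).toNat = A - d := by omega
  rw [h1, h2, h3]

lemma gauss_zero_zero : gauss u 0 0 = 1 := by
  rw [gauss, if_pos ⟨le_rfl, le_rfl⟩]
  simp [phiPoch_zero]

lemma gauss_not (a b : ℤ) (h : ¬(0 ≤ b ∧ b ≤ a)) : gauss u a b = 0 := by
  rw [gauss, if_neg h]

lemma gauss_G1 (hu : ∀ i : ℕ, 1 ≤ i → (1 : F) - u ^ i ≠ 0) (A d : ℕ) (hd : d ≤ A) :
    (1 - u ^ (A - d)) * gauss u (A : ℤ) (d : ℤ)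
      = (1 - u ^ A) * gauss u ((A : ℤ) - 1) (d : ℤ) := by
  rcases eq_or_lt_of_le hd with rfl | hdA
  · simp only [Nat.sub_self, pow_zero, sub_self, zero_mul]
    rw [gauss_not _ _ (by omega), mul_zero]
  · have hA1 : 1 ≤ A := by omega
    have h1 : ((A : ℤ) - 1) = ((A - 1 : ℕ) : ℤ) := by omega
    rw [h1, gauss_nat A d hd, gauss_nat (A - 1) d (by omega)]
    have e1 : phiPoch u A = phiPoch u (A - 1) * (1 - u ^ A) := by
      have := phiPoch_succ (u := u) (A - 1)
      rw [Nat.sub_add_cancel hA1] at this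
      exact this
    have e2 : phiPoch u (A - d) = phiPoch u (A - 1 - d) * (1 - u ^ (A - d)) := by
      have := phiPoch_succ (u := u) (A - d - 1)
      rw [Nat.sub_add_cancel (by omega)] at this
      rw [this]
      congr 2
      omega
    rw [e1, e2]
    have n1 := phiPoch_ne_zero hu d
    have n2 := phiPoch_ne_zero hu (A - 1 - d)
    have n3 := hu (A - d) (by omega)
    have n4 := hu A (by omega)
    field_simp

/-! ### Transfer-matrix machinery -/

noncomputable def colW (u : F) (a b : ℕ → ℕ) (s : Finset ℕ) (j : ℕ) : F :=
  if j ∈ s then gauss u ((a j : ℤ) - b (j + 1) - 1) ((b j : ℤ) - b (j + 1))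
  else u ^ (a j - b j) * gauss u ((a j : ℤ) - b (j + 1)) ((b j : ℤ) - b (j + 1))

noncomputable def colV (u : F) (a : ℕ → ℕ) (s : Finset ℕ) (j : ℕ) : F :=
  if j ∈ s ∧ j + 1 ∉ s then 1 - u ^ (a j - a (j + 1)) else 1

noncomputable def PS (u : F) (a b : ℕ → ℕ) (N : ℕ) (e : Bool) : F :=
  ∑ s ∈ (Finset.Icc 2 N).powerset.filter (fun s => (N ∈ s) = (e = true)),
    (∏ j ∈ Finset.Icc 2 N, colW u a b s j) * ∏ j ∈ Finset.Icc 2 (N - 1), colV u a s j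

lemma colV_not_mem {a : ℕ → ℕ} {s : Finset ℕ} {j : ℕ} (h : j ∉ s) : colV u a s j = 1 := by
  rw [colV, if_neg]; tauto

lemma vsplit {a : ℕ → ℕ} {s : Finset ℕ} (h1 : (1 : ℕ) ∉ s) {N : ℕ} (hN : 1 ≤ N) :
    ∏ j ∈ Finset.Icc 2 N, colV u a s j
      = (∏ j ∈ Finset.Icc 2 (N - 1), colV u a s j) * colV u a s N := by
  rcases eq_or_lt_of_le hN with rfl | hN2
  · simp [Finset.Icc_eq_empty_of_lt (by omega : (1:ℕ) < 2), colV_not_mem h1]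
  · have h2 : 2 ≤ N := hN2
    have : Finset.Icc 2 N = insert N (Finset.Icc 2 (N - 1)) := by
      ext k
      simp only [Finset.mem_Icc, Finset.mem_insert]
      omega
    rw [this, Finset.prod_insert (by simp only [Finset.mem_Icc]; omega), mul_comm]

lemma core (hu : ∀ i : ℕ, 1 ≤ i → (1 : F) - u ^ i ≠ 0) (a b : ℕ → ℕ)
    (ha : ∀ j, 1 ≤ j → a (j + 1) ≤ a j) (hb : ∀ j, 1 ≤ j → b (j + 1) ≤ b j)
    (hba : ∀ j, 1 ≤ j → b j ≤ a j) :
    ∀ N, 1 ≤ N →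
      PS u a b N false + (1 - u ^ (a N - b (N + 1))) * PS u a b N true
        = ∏ j ∈ Finset.Icc 2 N, gauss u ((a j : ℤ) - b (j + 1)) ((b j : ℤ) - b (j + 1)) := by
  intro N hN
  induction N, hN using Nat.le_induction with
  | base =>
    have hicc : Finset.Icc 2 1 = (∅ : Finset ℕ) := by apply Finset.Icc_eq_empty; omega
    have h1 : PS u a b 1 false = 1 := by simp [PS, hicc, Finset.filter_singleton]
    have h2 : PS u a b 1 true = 0 := by simp [PS, hicc, Finset.filter_singleton]
    rw [h1, h2, hicc]
    simp
  | succ N hN IH =>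
    have hsplit : Finset.Icc 2 (N + 1) = insert (N + 1) (Finset.Icc 2 N) := by
      ext k; simp only [Finset.mem_Icc, Finset.mem_insert]; omega
    have hNmem : (N + 1) ∉ Finset.Icc 2 N := by simp [Finset.mem_Icc]
    have hone : ∀ s : Finset ℕ, s ⊆ Finset.Icc 2 N → (1 : ℕ) ∉ s := by
      intro s hs h1; have := hs h1; simp [Finset.mem_Icc] at this
    have e1 : (Finset.Icc 2 N).powerset.filter (fun s => (N ∈ s) = (true = true))
        = (Finset.Icc 2 N).powerset.filter (fun s => N ∈ s) :=
      Finset.filter_congr (by intro x _; simp)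
    have e0 : (Finset.Icc 2 N).powerset.filter (fun s => (N ∈ s) = (false = true))
        = (Finset.Icc 2 N).powerset.filter (fun s => ¬ N ∈ s) :=
      Finset.filter_congr (by intro x _; simp)
    have claimA : PS u a b (N + 1) false
        = (u ^ (a (N + 1) - b (N + 1)) *
            gauss u ((a (N + 1) : ℤ) - b (N + 2)) ((b (N + 1) : ℤ) - b (N + 2))) *
          (PS u a b N false + (1 - u ^ (a N - a (N + 1))) * PS u a b N true) := by
      rw [PS]
      have hidx : (Finset.Icc 2 (N + 1)).powerset.filter
            (fun s => (N + 1 ∈ s) = (false = true)) = (Finset.Icc 2 N).powerset := by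
        ext s
        simp only [Finset.mem_filter, Finset.mem_powerset, hsplit, eq_iff_iff,
          Bool.false_eq_true, iff_false]
        constructor
        · rintro ⟨hs, hns⟩
          exact (Finset.subset_insert_iff_of_notMem hns).mp hs
        · intro hs
          refine ⟨hs.trans (Finset.subset_insert _ _), fun hmem => ?_⟩
          have := hs hmem
          simp [Finset.mem_Icc] at this
      rw [hidx]
      have hterm : ∀ s ∈ (Finset.Icc 2 N).powerset,
          (∏ j ∈ Finset.Icc 2 (N + 1), colW u a b s j) *
              ∏ j ∈ Finset.Icc 2 (N + 1 - 1), colV u a s j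
            = (u ^ (a (N + 1) - b (N + 1)) *
                gauss u ((a (N + 1) : ℤ) - b (N + 2)) ((b (N + 1) : ℤ) - b (N + 2))) *
              ((((∏ j ∈ Finset.Icc 2 N, colW u a b s j) *
                  ∏ j ∈ Finset.Icc 2 (N - 1), colV u a s j)) * colV u a s N) := by
        intro s hs
        rw [Finset.mem_powerset] at hs
        have h1s : (1 : ℕ) ∉ s := hone s hs
        have hN1s : (N + 1) ∉ s := fun h => by
          have := hs h; simp [Finset.mem_Icc] at this
        rw [hsplit, Finset.prod_insert hNmem]
        have hIc : Finset.Icc 2 (N + 1 - 1) = Finset.Icc 2 N := by norm_num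
        rw [hIc, vsplit h1s hN]
        rw [colW, if_neg hN1s]
        ring
      rw [Finset.sum_congr rfl hterm, ← Finset.mul_sum]
      congr 1
      rw [← Finset.sum_filter_add_sum_filter_not ((Finset.Icc 2 N).powerset)
        (fun s => N ∈ s)]
      have hA : ∀ s ∈ (Finset.Icc 2 N).powerset.filter (fun s => N ∈ s),
          ((∏ j ∈ Finset.Icc 2 N, colW u a b s j) *
              ∏ j ∈ Finset.Icc 2 (N - 1), colV u a s j) * colV u a s N
            = (1 - u ^ (a N - a (N + 1))) *
              ((∏ j ∈ Finset.Icc 2 N, colW u a b s j) *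
                ∏ j ∈ Finset.Icc 2 (N - 1), colV u a s j) := by
        intro s hs
        rw [Finset.mem_filter, Finset.mem_powerset] at hs
        have hN1s : (N + 1) ∉ s := fun h => by
          have := hs.1 h; simp [Finset.mem_Icc] at this
        rw [colV, if_pos ⟨hs.2, hN1s⟩]
        ring
      have hB : ∀ s ∈ (Finset.Icc 2 N).powerset.filter (fun s => ¬ N ∈ s),
          ((∏ j ∈ Finset.Icc 2 N, colW u a b s j) *
              ∏ j ∈ Finset.Icc 2 (N - 1), colV u a s j) * colV u a s N
            = (∏ j ∈ Finset.Icc 2 N, colW u a b s j) *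
                ∏ j ∈ Finset.Icc 2 (N - 1), colV u a s j := by
        intro s hs
        rw [Finset.mem_filter] at hs
        rw [colV, if_neg (by tauto)]
        ring
      rw [Finset.sum_congr rfl hA, Finset.sum_congr rfl hB, ← Finset.mul_sum]
      rw [PS, PS, e0, e1]
      ring
    have claimB : PS u a b (N + 1) true
        = gauss u ((a (N + 1) : ℤ) - b (N + 2) - 1) ((b (N + 1) : ℤ) - b (N + 2)) *
          (PS u a b N false + PS u a b N true) := by
      rw [PS]
      have hidx : (Finset.Icc 2 (N + 1)).powerset.filter
            (fun s => (N + 1 ∈ s) = (true = true))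
          = (Finset.Icc 2 N).powerset.image (insert (N + 1)) := by
        ext s
        simp only [Finset.mem_filter, Finset.mem_powerset, hsplit, eq_iff_iff, iff_true,
          Finset.mem_image]
        constructor
        · rintro ⟨hs, hmem⟩
          refine ⟨s.erase (N + 1), Finset.subset_insert_iff.mp hs, Finset.insert_erase hmem⟩
        · rintro ⟨r, hr, rfl⟩
          exact ⟨Finset.insert_subset_insert _ hr, Finset.mem_insert_self _ _⟩
      rw [hidx]
      rw [Finset.sum_image (by
        intro r hr r' hr' hins
        rw [Finset.mem_coe, Finset.mem_powerset] at hr hr'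
        have h1 : (N + 1) ∉ r := fun h => by
          have := hr h; simp [Finset.mem_Icc] at this
        have h2 : (N + 1) ∉ r' := fun h => by
          have := hr' h; simp [Finset.mem_Icc] at this
        rw [← Finset.erase_insert h1, ← Finset.erase_insert h2, hins])]
      have hterm : ∀ r ∈ (Finset.Icc 2 N).powerset,
          (∏ j ∈ Finset.Icc 2 (N + 1), colW u a b (insert (N + 1) r) j) *
              ∏ j ∈ Finset.Icc 2 (N + 1 - 1), colV u a (insert (N + 1) r) j
            = gauss u ((a (N + 1) : ℤ) - b (N + 2) - 1) ((b (N + 1) : ℤ) - b (N + 2)) *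
              ((∏ j ∈ Finset.Icc 2 N, colW u a b r j) *
                ∏ j ∈ Finset.Icc 2 (N - 1), colV u a r j) := by
        intro r hr
        rw [Finset.mem_powerset] at hr
        have h1r : (1 : ℕ) ∉ insert (N + 1) r := by
          intro h
          rcases Finset.mem_insert.mp h with h | h
          · omega
          · exact hone r hr h
        have hN1r : (N + 1) ∉ r := fun h => by
          have := hr h; simp [Finset.mem_Icc] at this
        rw [hsplit, Finset.prod_insert hNmem]
        have hIc : Finset.Icc 2 (N + 1 - 1) = Finset.Icc 2 N := by norm_num
        rw [hIc, vsplit h1r hN]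
        have hcW : colW u a b (insert (N + 1) r) (N + 1)
            = gauss u ((a (N + 1) : ℤ) - b (N + 2) - 1) ((b (N + 1) : ℤ) - b (N + 2)) := by
          rw [colW, if_pos (Finset.mem_insert_self _ _)]
        have hcV : colV u a (insert (N + 1) r) N = 1 := by
          rw [colV, if_neg (by
            rintro ⟨-, hc⟩
            exact hc (Finset.mem_insert_self _ _))]
        have hWc : ∀ j ∈ Finset.Icc 2 N,
            colW u a b (insert (N + 1) r) j = colW u a b r j := by
          intro j hj
          rw [Finset.mem_Icc] at hj
          have : j ∈ insert (N + 1) r ↔ j ∈ r := by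
            rw [Finset.mem_insert]
            constructor
            · rintro (h | h)
              · omega
              · exact h
            · exact Or.inr
          rw [colW, colW]
          by_cases hjr : j ∈ r
          · rw [if_pos (this.mpr hjr), if_pos hjr]
          · rw [if_neg (fun h => hjr (this.mp h)), if_neg hjr]
        have hVc : ∀ j ∈ Finset.Icc 2 (N - 1),
            colV u a (insert (N + 1) r) j = colV u a r j := by
          intro j hj
          rw [Finset.mem_Icc] at hj
          have m1 : j ∈ insert (N + 1) r ↔ j ∈ r := by
            rw [Finset.mem_insert]
            constructor
            · rintro (h | h)
              · omega
              · exact h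
            · exact Or.inr
          have m2 : j + 1 ∈ insert (N + 1) r ↔ j + 1 ∈ r := by
            rw [Finset.mem_insert]
            constructor
            · rintro (h | h)
              · omega
              · exact h
            · exact Or.inr
          rw [colV, colV]
          by_cases hc : j ∈ r ∧ j + 1 ∉ r
          · rw [if_pos ⟨m1.mpr hc.1, fun h => hc.2 (m2.mp h)⟩, if_pos hc]
          · rw [if_neg (by
              rintro ⟨hx, hy⟩
              exact hc ⟨m1.mp hx, fun h => hy (m2.mpr h)⟩), if_neg hc]
        rw [hcV, hcW, Finset.prod_congr rfl hWc, Finset.prod_congr rfl hVc]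
        ring
      rw [Finset.sum_congr rfl hterm, ← Finset.mul_sum]
      congr 1
      rw [← Finset.sum_filter_add_sum_filter_not ((Finset.Icc 2 N).powerset)
        (fun s => N ∈ s), PS, PS, e0, e1]
      ring
    -- final assembly
    have hb1 : b (N + 2) ≤ b (N + 1) := hb (N + 1) (by omega)
    have hba1 : b (N + 1) ≤ a (N + 1) := hba (N + 1) (by omega)
    have hba0 : b (N + 1) ≤ a N := le_trans hba1 (ha N hN)
    have haa : a (N + 1) ≤ a N := ha N hN
    have hc1 : ((a (N + 1) : ℤ) - b (N + 2)) = ((a (N + 1) - b (N + 2) : ℕ) : ℤ) := by omega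
    have hc2 : ((b (N + 1) : ℤ) - b (N + 2)) = ((b (N + 1) - b (N + 2) : ℕ) : ℤ) := by omega
    have hG1 := gauss_G1 (u := u) hu (a (N + 1) - b (N + 2)) (b (N + 1) - b (N + 2))
      (by omega)
    have hsub : a (N + 1) - b (N + 2) - (b (N + 1) - b (N + 2)) = a (N + 1) - b (N + 1) := by
      omega
    rw [hsub] at hG1
    have hG1' : (1 - u ^ (a (N + 1) - b (N + 1))) *
        gauss u ((a (N + 1) : ℤ) - b (N + 2)) ((b (N + 1) : ℤ) - b (N + 2))
        = (1 - u ^ (a (N + 1) - b (N + 2))) *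
          gauss u ((a (N + 1) : ℤ) - b (N + 2) - 1) ((b (N + 1) : ℤ) - b (N + 2)) := by
      rw [hc1, hc2]
      exact hG1
    have hpow : u ^ (a N - b (N + 1)) = u ^ (a N - a (N + 1)) * u ^ (a (N + 1) - b (N + 1)) := by
      rw [← pow_add]
      congr 1
      omega
    simp only [show b (N + 1 + 1) = b (N + 2) from rfl]
    rw [hsplit, Finset.prod_insert hNmem, ← IH, claimA, claimB, hpow]
    linear_combination (-(PS u a b N false + PS u a b N true)) * hG1'

noncomputable def TS (u : F) (a b : ℕ → ℕ) (N : ℕ) : F :=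
  ∑ s ∈ (Finset.Icc 2 N).powerset,
    (∏ j ∈ Finset.Icc 2 N, colW u a b s j) * ∏ j ∈ Finset.Icc 2 N, colV u a s j

lemma total (hu : ∀ i : ℕ, 1 ≤ i → (1 : F) - u ^ i ≠ 0) (a b : ℕ → ℕ)
    (ha : ∀ j, 1 ≤ j → a (j + 1) ≤ a j) (hb : ∀ j, 1 ≤ j → b (j + 1) ≤ b j)
    (hba : ∀ j, 1 ≤ j → b j ≤ a j) (N : ℕ) (hN : 1 ≤ N)
    (haN : a (N + 1) = 0) (hbN : b (N + 1) = 0) :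
    TS u a b N
      = ∏ j ∈ Finset.Icc 2 N, gauss u ((a j : ℤ) - b (j + 1)) ((b j : ℤ) - b (j + 1)) := by
  rw [← core hu a b ha hb hba N hN, TS]
  have hone : ∀ s : Finset ℕ, s ⊆ Finset.Icc 2 N → (1 : ℕ) ∉ s := by
    intro s hs h1; have := hs h1; simp [Finset.mem_Icc] at this
  have hterm : ∀ s ∈ (Finset.Icc 2 N).powerset,
      (∏ j ∈ Finset.Icc 2 N, colW u a b s j) * ∏ j ∈ Finset.Icc 2 N, colV u a s j
        = ((∏ j ∈ Finset.Icc 2 N, colW u a b s j) *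
            ∏ j ∈ Finset.Icc 2 (N - 1), colV u a s j) * colV u a s N := by
    intro s hs
    rw [Finset.mem_powerset] at hs
    rw [vsplit (hone s hs) hN]
    ring
  rw [Finset.sum_congr rfl hterm]
  rw [← Finset.sum_filter_add_sum_filter_not ((Finset.Icc 2 N).powerset) (fun s => N ∈ s)]
  have e1 : (Finset.Icc 2 N).powerset.filter (fun s => (N ∈ s) = (true = true))
      = (Finset.Icc 2 N).powerset.filter (fun s => N ∈ s) :=
    Finset.filter_congr (by intro x _; simp)
  have e0 : (Finset.Icc 2 N).powerset.filter (fun s => (N ∈ s) = (false = true))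
      = (Finset.Icc 2 N).powerset.filter (fun s => ¬ N ∈ s) :=
    Finset.filter_congr (by intro x _; simp)
  have hA : ∀ s ∈ (Finset.Icc 2 N).powerset.filter (fun s => N ∈ s),
      ((∏ j ∈ Finset.Icc 2 N, colW u a b s j) *
          ∏ j ∈ Finset.Icc 2 (N - 1), colV u a s j) * colV u a s N
        = (1 - u ^ (a N - b (N + 1))) *
          ((∏ j ∈ Finset.Icc 2 N, colW u a b s j) *
            ∏ j ∈ Finset.Icc 2 (N - 1), colV u a s j) := by
    intro s hs
    rw [Finset.mem_filter, Finset.mem_powerset] at hs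
    have hN1s : (N + 1) ∉ s := fun h => by
      have := hs.1 h; simp [Finset.mem_Icc] at this
    rw [colV, if_pos ⟨hs.2, hN1s⟩, haN, hbN]
    ring
  have hB : ∀ s ∈ (Finset.Icc 2 N).powerset.filter (fun s => ¬ N ∈ s),
      ((∏ j ∈ Finset.Icc 2 N, colW u a b s j) *
          ∏ j ∈ Finset.Icc 2 (N - 1), colV u a s j) * colV u a s N
        = (∏ j ∈ Finset.Icc 2 N, colW u a b s j) *
            ∏ j ∈ Finset.Icc 2 (N - 1), colV u a s j := by
    intro s hs
    rw [Finset.mem_filter] at hs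
    rw [colV, if_neg (by tauto)]
    ring
  rw [Finset.sum_congr rfl hA, Finset.sum_congr rfl hB, ← Finset.mul_sum]
  rw [PS, PS, e0, e1]
  ring



/-! ### Parametrization of the intermediate partitions -/

def chi (s : Finset ℕ) (j : ℕ) : ℕ := if j ∈ s then 1 else 0

noncomputable def Phi (f : ℕ → ℕ) (s : Finset ℕ) : ℕ → ℕ :=
  fun i => ((Finset.Icc 1 (f 0)).filter (fun j => i < conj f j - chi s j)).card

/-- For partitions `λ` of length `n ≥ 1` and `μ ⊆ λ` of length `n-1`,
`Σ_β φ_{λ/β}(t²) t^{2(|β|-|μ|)} sk_{β/μ}(t²) = t² sk_{λ/μ}(t²)`, the sum being over all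
partitions `β` with `μ ⊆ β`, `λ/β` a horizontal strip, and `l(β) = n`. -/
theorem stmt2 (n : ℕ) (hn : 1 ≤ n) (f g : ℕ → ℕ)
    (hf : IsPartition f) (hfl : HasLength f n)
    (hg : IsPartition g) (hgl : HasLength g (n - 1))
    (hsub : ∀ i, g i ≤ f i) :
    (∑ᶠ (β : ℕ → ℕ)
        (_ : IsPartition β ∧ (∀ i, g i ≤ β i) ∧ IsHStrip f β ∧ HasLength β n),
        phiStrip ((RatFunc.X : RatFunc ℚ) ^ 2) f β *
          ((RatFunc.X : RatFunc ℚ) ^ 2) ^ (psize β - psize g) *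
          sk ((RatFunc.X : RatFunc ℚ) ^ 2) β g)
      = (RatFunc.X : RatFunc ℚ) ^ 2 * sk ((RatFunc.X : RatFunc ℚ) ^ 2) f g := by
  classical
  set u : RatFunc ℚ := (RatFunc.X : RatFunc ℚ) ^ 2 with hudef
  have hu : ∀ i : ℕ, 1 ≤ i → (1 : RatFunc ℚ) - u ^ i ≠ 0 :=
    fun i hi => one_sub_X2_pow_ne_zero i hi
  have hfa := hf.1
  have hga := hg.1
  have hf0 : ∀ i, n ≤ i → f i = 0 := hfl.2
  have hg0 : ∀ i, n - 1 ≤ i → g i = 0 := hgl.2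
  have hJ1 : 1 ≤ f 0 := hfl.1 0 (by omega)
  have hgJ : g 0 ≤ f 0 := hsub 0
  have ha1 : conj f 1 = n := conj_one hfa hfl
  have hb1 : conj g 1 = n - 1 := conj_one hga hgl
  have haJ : conj f (f 0 + 1) = 0 := conj_eq_zero hfa (by omega)
  have hbJ : conj g (f 0 + 1) = 0 := conj_eq_zero hga (by omega)
  have hapos : ∀ j, 1 ≤ j → j ≤ f 0 → 1 ≤ conj f j := by
    intro j h1 h2
    have h := (conj_lt_iff hfa hf0 h1 0).mpr h2
    omega
  have hanti : ∀ j k, 1 ≤ j → j ≤ k → conj f k ≤ conj f j :=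
    fun j k h1 h2 => conj_anti hfa hf0 h1 h2
  have hbanti : ∀ j k, 1 ≤ j → j ≤ k → conj g k ≤ conj g j :=
    fun j k h1 h2 => conj_anti hga hg0 h1 h2
  have hba : ∀ j, 1 ≤ j → conj g j ≤ conj f j := fun j h => conj_mono_f hsub hfa hf0 h
  have haub : ∀ j, 1 ≤ j → conj f j ≤ n := by
    intro j h
    have := hanti 1 j le_rfl h
    omega
  set A : Finset (Finset ℕ) := (Finset.Icc 2 (f 0)).powerset.filter
    (fun s => (∀ j ∈ s, conj g j < conj f j) ∧
      (∀ j ∈ s, j + 1 ≤ f 0 → conj f (j + 1) = conj f j → j + 1 ∈ s)) with hAdef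
  have hAmem : ∀ s ∈ A, s ⊆ Finset.Icc 2 (f 0) ∧ (∀ j ∈ s, conj g j < conj f j) ∧
      (∀ j ∈ s, j + 1 ≤ f 0 → conj f (j + 1) = conj f j → j + 1 ∈ s) := by
    intro s hs
    rw [hAdef, Finset.mem_filter, Finset.mem_powerset] at hs
    exact ⟨hs.1, hs.2.1, hs.2.2⟩
  have hones : ∀ s : Finset ℕ, s ⊆ Finset.Icc 2 (f 0) → (1 : ℕ) ∉ s := by
    intro s hs h
    have := hs h
    simp [Finset.mem_Icc] at this
  have hsrange : ∀ s : Finset ℕ, s ⊆ Finset.Icc 2 (f 0) → ∀ j ∈ s, 2 ≤ j ∧ j ≤ f 0 := by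
    intro s hs j hj
    exact Finset.mem_Icc.mp (hs hj)
  have hchile : ∀ (s : Finset ℕ) j, chi s j ≤ 1 := by
    intro s j; unfold chi; split <;> omega
  have ha'step : ∀ s ∈ A, ∀ j, 1 ≤ j →
      conj f (j + 1) - chi s (j + 1) ≤ conj f j - chi s j := by
    intro s hsA j hj
    obtain ⟨hs2, hadm1, hadm2⟩ := hAmem s hsA
    by_cases hjs : j ∈ s
    · have hjJ := (hsrange s hs2 j hjs).2
      by_cases hj1s : j + 1 ∈ s
      · have := hanti j (j + 1) hj (by omega)
        simp only [chi, if_pos hjs, if_pos hj1s]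
        omega
      · rcases eq_or_lt_of_le hjJ with heq | hlt
        · have h0 : conj f (j + 1) = 0 := by rw [heq]; exact haJ
          simp only [chi, if_pos hjs, if_neg hj1s]
          omega
        · have hne : conj f (j + 1) ≠ conj f j := fun hc => hj1s (hadm2 j hjs (by omega) hc)
          have := hanti j (j + 1) hj (by omega)
          simp only [chi, if_pos hjs, if_neg hj1s]
          omega
    · have := hanti j (j + 1) hj (by omega)
      have hch := hchile s (j + 1)
      simp only [chi, if_neg hjs]
      omega
  have ha'mono : ∀ s ∈ A, ∀ j k, 1 ≤ j → j ≤ k →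
      conj f k - chi s k ≤ conj f j - chi s j := by
    intro s hsA j k hj hjk
    induction k, hjk using Nat.le_induction with
    | base => exact le_rfl
    | succ k hk IH => exact le_trans (ha'step s hsA k (by omega)) IH
  have hPHI1 : ∀ s ∈ A, ∀ i j, 1 ≤ j → j ≤ f 0 →
      (j ≤ Phi f s i ↔ i < conj f j - chi s j) := by
    intro s hsA i j h1 h2
    have hds := filter_Icc_downset (f 0) (fun j => i < conj f j - chi s j)
      (fun j k hj hjk hp => lt_of_lt_of_le hp (ha'mono s hsA j k hj hjk))
    constructor
    · intro h
      have hm : j ∈ Finset.Icc 1 ((Finset.Icc 1 (f 0)).filter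
          (fun j => i < conj f j - chi s j)).card := Finset.mem_Icc.mpr ⟨h1, h⟩
      rw [← hds] at hm
      exact (Finset.mem_filter.mp hm).2
    · intro h
      have hm : j ∈ (Finset.Icc 1 (f 0)).filter (fun j => i < conj f j - chi s j) :=
        Finset.mem_filter.mpr ⟨Finset.mem_Icc.mpr ⟨h1, h2⟩, h⟩
      rw [hds] at hm
      exact (Finset.mem_Icc.mp hm).2
  have hPhi_le_J : ∀ s i, Phi f s i ≤ f 0 := by
    intro s i
    have h := Finset.card_filter_le (Finset.Icc 1 (f 0))
      (fun j => i < conj f j - chi s j)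
    rw [Nat.card_Icc] at h
    show ((Finset.Icc 1 (f 0)).filter (fun j => i < conj f j - chi s j)).card ≤ f 0
    omega
  have hPhi_anti : ∀ s, Antitone (Phi f s) := by
    intro s i i' hii'
    apply Finset.card_le_card
    intro j hj
    rw [Finset.mem_filter] at hj ⊢
    exact ⟨hj.1, lt_of_le_of_lt hii' hj.2⟩
  have hPhi_zero : ∀ s i, n ≤ i → Phi f s i = 0 := by
    intro s i hi
    rw [Phi, Finset.card_eq_zero, Finset.filter_eq_empty_iff]
    intro j hj
    have h1 := (Finset.mem_Icc.mp hj).1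
    have := haub j h1
    have hch := hchile s j
    omega
  have hPhi_len : ∀ s ∈ A, HasLength (Phi f s) n := by
    intro s hsA
    refine ⟨?_, hPhi_zero s⟩
    intro i hi
    have h1s : (1 : ℕ) ∉ s := hones s (hAmem s hsA).1
    have := (hPHI1 s hsA i 1 le_rfl hJ1).mpr
      (by simp only [chi, if_neg h1s]; rw [ha1]; omega)
    omega
  have hPart : ∀ s, IsPartition (Phi f s) := fun s => ⟨hPhi_anti s, ⟨n, hPhi_zero s⟩⟩
  have hconjPhi : ∀ s ∈ A, ∀ j, 1 ≤ j → j ≤ f 0 →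
      conj (Phi f s) j = conj f j - chi s j := by
    intro s hsA j h1 h2
    exact conj_eq_of (hPhi_anti s) (hPhi_zero s) h1 (fun i => hPHI1 s hsA i j h1 h2)
  have hconjPhiJ1 : ∀ s, conj (Phi f s) (f 0 + 1) = 0 := by
    intro s
    exact conj_eq_zero (hPhi_anti s) (by have := hPhi_le_J s 0; omega)
  have hgle : ∀ s ∈ A, ∀ i, g i ≤ Phi f s i := by
    intro s hsA i
    rw [row_eq_card hga hg0 hgJ i]
    apply Finset.card_le_card
    intro j hj
    obtain ⟨hjm, hjp⟩ := Finset.mem_filter.mp hj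
    rw [Finset.mem_filter]
    refine ⟨hjm, ?_⟩
    have h1 := (Finset.mem_Icc.mp hjm).1
    by_cases hjs : j ∈ s
    · have := (hAmem s hsA).2.1 j hjs
      simp only [chi, if_pos hjs]
      omega
    · have := hba j h1
      simp only [chi, if_neg hjs]
      omega
  have hlef : ∀ (s : Finset ℕ) i, Phi f s i ≤ f i := by
    intro s i
    rw [row_eq_card hfa hf0 le_rfl i]
    apply Finset.card_le_card
    intro j hj
    obtain ⟨hjm, hjp⟩ := Finset.mem_filter.mp hj
    rw [Finset.mem_filter]
    refine ⟨hjm, ?_⟩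
    have hch := hchile s j
    omega
  have hstrip : ∀ s ∈ A, IsHStrip f (Phi f s) := by
    intro s hsA
    refine ⟨hlef s, ?_⟩
    intro j hj
    rcases le_or_gt j (f 0) with h2 | h2
    · rw [hconjPhi s hsA j hj h2]
      have := hapos j hj h2
      have hch := hchile s j
      omega
    · rw [conj_eq_zero hfa h2]
      omega
  have hrecover : ∀ s ∈ A, ∀ j,
      (j ∈ s ↔ (j ∈ Finset.Icc 2 (f 0) ∧ conj (Phi f s) j ≠ conj f j)) := by
    intro s hsA j
    constructor
    · intro hj
      have hmem := (hAmem s hsA).1 hj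
      have hr := Finset.mem_Icc.mp hmem
      have := hapos j (by omega) hr.2
      rw [hconjPhi s hsA j (by omega) hr.2]
      refine ⟨hmem, ?_⟩
      simp only [chi, if_pos hj]
      omega
    · rintro ⟨hmem, hne⟩
      by_contra hjs
      have hr := Finset.mem_Icc.mp hmem
      rw [hconjPhi s hsA j (by omega) hr.2] at hne
      simp only [chi, if_neg hjs, Nat.sub_zero] at hne
      exact hne rfl
  have hinj : ∀ x ∈ A, ∀ y ∈ A, Phi f x = Phi f y → x = y := by
    intro x hx y hy hxy
    ext j
    rw [hrecover x hx j, hrecover y hy j, hxy]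
  have hset : {β : ℕ → ℕ | IsPartition β ∧ (∀ i, g i ≤ β i) ∧ IsHStrip f β ∧ HasLength β n}
      = ↑(A.image (Phi f)) := by
    ext β
    simp only [Set.mem_setOf_eq, Finset.coe_image, Set.mem_image, Finset.mem_coe]
    constructor
    · rintro ⟨hβP, hgβ, hβstrip, hβlen⟩
      have hβa := hβP.1
      have hβ0 : ∀ i, n ≤ i → β i = 0 := hβlen.2
      have hβconj_le : ∀ j, 1 ≤ j → conj β j ≤ conj f j :=
        fun j hj => conj_mono_f hβstrip.1 hfa hf0 hj
      have hβconj_ge : ∀ j, 1 ≤ j → conj f j ≤ conj β j + 1 := hβstrip.2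
      have hβ1 : conj β 1 = n := conj_one hβa hβlen
      have hgβc : ∀ j, 1 ≤ j → conj g j ≤ conj β j :=
        fun j hj => conj_mono_f hgβ hβa hβ0 hj
      set s : Finset ℕ := (Finset.Icc 2 (f 0)).filter (fun j => conj β j ≠ conj f j)
        with hsdef
      have hs2 : s ⊆ Finset.Icc 2 (f 0) := Finset.filter_subset _ _
      have hβval : ∀ j, 1 ≤ j → j ≤ f 0 → conj β j = conj f j - chi s j := by
        intro j h1 h2
        by_cases hne : conj β j = conj f j
        · have hjs : j ∉ s := by
            rw [hsdef, Finset.mem_filter]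
            intro hc
            exact hc.2 hne
          simp only [chi, if_neg hjs]
          omega
        · have h2j : 2 ≤ j := by
            rcases eq_or_lt_of_le h1 with h | h
            · exfalso
              apply hne
              rw [← h, hβ1, ha1]
            · omega
          have hjs : j ∈ s := by
            rw [hsdef, Finset.mem_filter]
            exact ⟨Finset.mem_Icc.mpr ⟨h2j, h2⟩, hne⟩
          simp only [chi, if_pos hjs]
          have hle := hβconj_le j h1
          have hge := hβconj_ge j h1
          omega
      have hsA : s ∈ A := by
        rw [hAdef, Finset.mem_filter, Finset.mem_powerset]
        refine ⟨hs2, ?_, ?_⟩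
        · intro j hj
          have hr := Finset.mem_Icc.mp (hs2 hj)
          have hne := (Finset.mem_filter.mp hj).2
          have hle := hβconj_le j (by omega)
          have hgc := hgβc j (by omega)
          omega
        · intro j hj hj1 heq
          have hr := Finset.mem_Icc.mp (hs2 hj)
          have hv := hβval j (by omega) hr.2
          have hmono : conj β (j + 1) ≤ conj β j := conj_anti hβa hβ0 (by omega) (by omega)
          have hfpos := hapos j (by omega) hr.2
          rw [hsdef, Finset.mem_filter]
          refine ⟨Finset.mem_Icc.mpr ⟨by omega, hj1⟩, ?_⟩
          rw [hv] at hmono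
          simp only [chi, if_pos hj] at hmono
          omega
      refine ⟨s, hsA, ?_⟩
      funext i
      have hβ0J : β 0 ≤ f 0 := hβstrip.1 0
      have hrow := row_eq_card hβa hβ0 hβ0J i
      rw [show Phi f s i
          = ((Finset.Icc 1 (f 0)).filter (fun j => i < conj f j - chi s j)).card from rfl,
        hrow]
      congr 1
      apply Finset.filter_congr
      intro j hj
      have hr := Finset.mem_Icc.mp hj
      rw [hβval j hr.1 hr.2]
    · rintro ⟨s, hsA, rfl⟩
      exact ⟨hPart s, hgle s hsA, hstrip s hsA, hPhi_len s hsA⟩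
  have hLHSsum : (∑ᶠ (β : ℕ → ℕ)
        (_ : IsPartition β ∧ (∀ i, g i ≤ β i) ∧ IsHStrip f β ∧ HasLength β n),
        phiStrip u f β * u ^ (psize β - psize g) * sk u β g)
      = ∑ s ∈ A, phiStrip u f (Phi f s) * u ^ (psize (Phi f s) - psize g)
          * sk u (Phi f s) g := by
    have h0 : (∑ᶠ (β : ℕ → ℕ)
          (_ : IsPartition β ∧ (∀ i, g i ≤ β i) ∧ IsHStrip f β ∧ HasLength β n),
          phiStrip u f β * u ^ (psize β - psize g) * sk u β g)
        = ∑ᶠ β ∈ {β : ℕ → ℕ | IsPartition β ∧ (∀ i, g i ≤ β i) ∧ IsHStrip f β ∧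
            HasLength β n},
          phiStrip u f β * u ^ (psize β - psize g) * sk u β g := rfl
    rw [h0, hset, finsum_mem_coe_finset, Finset.sum_image hinj]
  have hterm : ∀ s ∈ A,
      phiStrip u f (Phi f s) * u ^ (psize (Phi f s) - psize g) * sk u (Phi f s) g
        = (u ^ (∑ j ∈ Finset.Icc 1 (f 0), Nat.choose (conj f j - conj g j) 2) * u *
            gauss u ((conj f 1 : ℤ) - conj g 2) ((conj g 1 : ℤ) - conj g 2)) *
          ((∏ j ∈ Finset.Icc 2 (f 0), colW u (conj f) (conj g) s j) *
            ∏ j ∈ Finset.Icc 2 (f 0), colV u (conj f) s j) := by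
    intro s hsA
    obtain ⟨hs2, hadm1, hadm2⟩ := hAmem s hsA
    have h1s := hones s hs2
    have hβa := hPhi_anti s
    have hβ0 := hPhi_zero s
    have hβ0J : Phi f s 0 ≤ f 0 := hPhi_le_J s 0
    have hp1 : phiStrip u f (Phi f s) = ∏ j ∈ Finset.Icc 2 (f 0), colV u (conj f) s j := by
      rw [phiStrip, if_pos (hstrip s hsA)]
      have hcond : ∀ j ∈ Finset.Icc 1 (f 0),
          ((conj f j = conj (Phi f s) j + 1 ∧ conj f (j + 1) = conj (Phi f s) (j + 1))
            ↔ (j ∈ s ∧ j + 1 ∉ s)) := by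
        intro j hj
        obtain ⟨hj1, hj2⟩ := Finset.mem_Icc.mp hj
        have hcv := hconjPhi s hsA j hj1 hj2
        have hfpos := hapos j hj1 hj2
        constructor
        · rintro ⟨hc1, hc2⟩
          have hjs : j ∈ s := by
            by_contra hjs
            rw [hcv] at hc1
            simp only [chi, if_neg hjs, Nat.sub_zero] at hc1
            omega
          refine ⟨hjs, fun hj1s => ?_⟩
          have hj1J : j + 1 ≤ f 0 := (Finset.mem_Icc.mp (hs2 hj1s)).2
          have hcv1 := hconjPhi s hsA (j + 1) (by omega) hj1J
          have hfpos1 := hapos (j + 1) (by omega) hj1J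
          rw [hcv1] at hc2
          simp only [chi, if_pos hj1s] at hc2
          omega
        · rintro ⟨hjs, hj1s⟩
          constructor
          · rw [hcv]
            simp only [chi, if_pos hjs]
            omega
          · rcases le_or_gt (j + 1) (f 0) with hle | hlt
            · rw [hconjPhi s hsA (j + 1) (by omega) hle]
              simp only [chi, if_neg hj1s, Nat.sub_zero]
            · have hjJ : j = f 0 := by omega
              rw [hjJ, haJ, hconjPhiJ1 s]
      rw [Finset.filter_congr hcond, Finset.prod_filter]
      have hins : Finset.Icc 1 (f 0) = insert 1 (Finset.Icc 2 (f 0)) := by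
        ext k
        simp only [Finset.mem_Icc, Finset.mem_insert]
        omega
      rw [hins, Finset.prod_insert (by simp [Finset.mem_Icc])]
      rw [if_neg (fun hc => h1s hc.1), one_mul]
      rfl
    have hgβ := hgle s hsA
    have hβconjle : ∀ j, 1 ≤ j → conj g j ≤ conj (Phi f s) j :=
      fun j hj => conj_mono_f hgβ hβa hβ0 hj
    have hzero_out : ∀ j ∈ Finset.Icc 1 (f 0), j ∉ Finset.Icc 1 (Phi f s 0) →
        conj (Phi f s) j = 0 ∧ conj g j = 0 ∧ conj g (j + 1) = 0 := by
      intro j hj hnj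
      obtain ⟨hj1, hj2⟩ := Finset.mem_Icc.mp hj
      have hβlt : Phi f s 0 < j := by
        rw [Finset.mem_Icc] at hnj
        omega
      have hcb : conj (Phi f s) j = 0 := by
        by_contra hc
        have := (conj_lt_iff hβa hβ0 hj1 0).mp (by omega)
        omega
      have hgb : conj g j = 0 := by
        have := hβconjle j hj1
        omega
      have hgb1 : conj g (j + 1) = 0 := by
        have := hbanti j (j + 1) hj1 (by omega)
        omega
      exact ⟨hcb, hgb, hgb1⟩
    have hIccsub : Finset.Icc 1 (Phi f s 0) ⊆ Finset.Icc 1 (f 0) :=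
      Finset.Icc_subset_Icc le_rfl hβ0J
    have hsum_ext : (∑ j ∈ Finset.Icc 1 (Phi f s 0),
          Nat.choose (conj (Phi f s) j - conj g j) 2)
        = ∑ j ∈ Finset.Icc 1 (f 0), Nat.choose (conj (Phi f s) j - conj g j) 2 := by
      apply Finset.sum_subset hIccsub
      intro j hj hnj
      obtain ⟨h1, h2, -⟩ := hzero_out j hj hnj
      rw [h1, h2]
      simp
    have hprod_ext : (∏ j ∈ Finset.Icc 1 (Phi f s 0),
          gauss u ((conj (Phi f s) j : ℤ) - conj g (j + 1))
            ((conj g j : ℤ) - conj g (j + 1)))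
        = ∏ j ∈ Finset.Icc 1 (f 0), gauss u ((conj (Phi f s) j : ℤ) - conj g (j + 1))
            ((conj g j : ℤ) - conj g (j + 1)) := by
      apply Finset.prod_subset hIccsub
      intro j hj hnj
      obtain ⟨h1, h2, h3⟩ := hzero_out j hj hnj
      rw [h1, h2, h3]
      norm_num
      exact gauss_zero_zero
    have hpsβ : psize (Phi f s) = ∑ j ∈ Finset.Icc 1 (f 0), conj (Phi f s) j :=
      psize_eq hβa hβ0 hβ0J
    have hpsg : psize g = ∑ j ∈ Finset.Icc 1 (f 0), conj g j := psize_eq hga hg0 hgJ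
    have hdiff : psize (Phi f s) - psize g
        = ∑ j ∈ Finset.Icc 1 (f 0), (conj (Phi f s) j - conj g j) := by
      rw [hpsβ, hpsg]
      exact (Finset.sum_tsub_distrib _
        (fun j hj => hβconjle j (Finset.mem_Icc.mp hj).1)).symm
    have hcol : ∀ j ∈ Finset.Icc 1 (f 0),
        u ^ ((conj (Phi f s) j - conj g j) + Nat.choose (conj (Phi f s) j - conj g j) 2) *
          gauss u ((conj (Phi f s) j : ℤ) - conj g (j + 1))
            ((conj g j : ℤ) - conj g (j + 1))
        = u ^ Nat.choose (conj f j - conj g j) 2 *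
          (if j = 1 then u * gauss u ((conj f 1 : ℤ) - conj g 2) ((conj g 1 : ℤ) - conj g 2)
           else colW u (conj f) (conj g) s j) := by
      intro j hj
      obtain ⟨hj1, hj2⟩ := Finset.mem_Icc.mp hj
      have hcv := hconjPhi s hsA j hj1 hj2
      by_cases hjs : j ∈ s
      · have hj2' : j ≠ 1 := fun h => h1s (h ▸ hjs)
        rw [if_neg hj2']
        have hclt := hadm1 j hjs
        have hfpos := hapos j hj1 hj2
        rw [hcv]
        simp only [chi, if_pos hjs]
        have he : conj f j - 1 - conj g j = conj f j - conj g j - 1 := by omega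
        rw [he]
        have hch : (conj f j - conj g j - 1) + Nat.choose (conj f j - conj g j - 1) 2
            = Nat.choose (conj f j - conj g j) 2 := by
          have h := choose_step (conj f j - conj g j - 1)
          have h1 : conj f j - conj g j - 1 + 1 = conj f j - conj g j := by omega
          rw [h1] at h
          exact h
        rw [hch]
        rw [colW, if_pos hjs]
        have hcast : ((conj f j - 1 : ℕ) : ℤ) - conj g (j + 1)
            = (conj f j : ℤ) - conj g (j + 1) - 1 := by omega
        rw [hcast]
      · rw [hcv]
        simp only [chi, if_neg hjs, Nat.sub_zero]
        rcases eq_or_ne j 1 with rfl | hne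
        · rw [if_pos rfl]
          have h1 : conj f 1 - conj g 1 = 1 := by
            rw [ha1, hb1]
            omega
          rw [h1]
          norm_num
        · rw [if_neg hne, colW, if_neg hjs]
          rw [pow_add]
          ring
    rw [hp1, sk, hsum_ext, hprod_ext, hdiff]
    have hmid : u ^ (∑ j ∈ Finset.Icc 1 (f 0), (conj (Phi f s) j - conj g j)) *
        (u ^ (∑ j ∈ Finset.Icc 1 (f 0), Nat.choose (conj (Phi f s) j - conj g j) 2) *
          ∏ j ∈ Finset.Icc 1 (f 0), gauss u ((conj (Phi f s) j : ℤ) - conj g (j + 1))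
            ((conj g j : ℤ) - conj g (j + 1)))
        = ∏ j ∈ Finset.Icc 1 (f 0),
            (u ^ ((conj (Phi f s) j - conj g j) +
                Nat.choose (conj (Phi f s) j - conj g j) 2) *
              gauss u ((conj (Phi f s) j : ℤ) - conj g (j + 1))
                ((conj g j : ℤ) - conj g (j + 1))) := by
      rw [Finset.prod_mul_distrib, Finset.prod_pow_eq_pow_sum, Finset.sum_add_distrib,
        pow_add, mul_assoc]
    have hfin : (∏ j ∈ Finset.Icc 1 (f 0),
          (u ^ Nat.choose (conj f j - conj g j) 2 *
            (if j = 1 then u * gauss u ((conj f 1 : ℤ) - conj g 2)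
                ((conj g 1 : ℤ) - conj g 2)
             else colW u (conj f) (conj g) s j)))
        = u ^ (∑ j ∈ Finset.Icc 1 (f 0), Nat.choose (conj f j - conj g j) 2) *
          ((u * gauss u ((conj f 1 : ℤ) - conj g 2) ((conj g 1 : ℤ) - conj g 2)) *
            ∏ j ∈ Finset.Icc 2 (f 0), colW u (conj f) (conj g) s j) := by
      rw [Finset.prod_mul_distrib, Finset.prod_pow_eq_pow_sum]
      congr 1
      have hins : Finset.Icc 1 (f 0) = insert 1 (Finset.Icc 2 (f 0)) := by
        ext k
        simp only [Finset.mem_Icc, Finset.mem_insert]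
        omega
      rw [hins, Finset.prod_insert (by simp [Finset.mem_Icc]), if_pos rfl]
      congr 1
      apply Finset.prod_congr rfl
      intro j hj
      have := (Finset.mem_Icc.mp hj).1
      rw [if_neg (by omega)]
    rw [mul_assoc, hmid, Finset.prod_congr rfl hcol, hfin]
    ring
  have hvanish : ∀ s ∈ (Finset.Icc 2 (f 0)).powerset, s ∉ A →
      (∏ j ∈ Finset.Icc 2 (f 0), colW u (conj f) (conj g) s j) *
        ∏ j ∈ Finset.Icc 2 (f 0), colV u (conj f) s j = 0 := by
    intro s hs hsA
    rw [Finset.mem_powerset] at hs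
    have hno : ¬((∀ j ∈ s, conj g j < conj f j) ∧
        (∀ j ∈ s, j + 1 ≤ f 0 → conj f (j + 1) = conj f j → j + 1 ∈ s)) := by
      intro hc
      exact hsA (by rw [hAdef, Finset.mem_filter]
                    exact ⟨Finset.mem_powerset.mpr hs, hc⟩)
    by_cases h1 : ∀ j ∈ s, conj g j < conj f j
    · have h2 : ∃ j ∈ s, j + 1 ≤ f 0 ∧ conj f (j + 1) = conj f j ∧ j + 1 ∉ s := by
        by_contra hc
        push_neg at hc
        exact hno ⟨h1, fun j hj hle heq => hc j hj hle heq⟩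
      obtain ⟨j, hjs, hjle, heq, hj1s⟩ := h2
      apply mul_eq_zero.mpr
      right
      apply Finset.prod_eq_zero (hs hjs)
      rw [colV, if_pos ⟨hjs, hj1s⟩]
      rw [show conj f j - conj f (j + 1) = 0 from by omega]
      simp
    · push_neg at h1
      obtain ⟨j, hjs, hge⟩ := h1
      apply mul_eq_zero.mpr
      left
      apply Finset.prod_eq_zero (hs hjs)
      rw [colW, if_pos hjs]
      apply gauss_not
      rintro ⟨hx, hy⟩
      have hr := Finset.mem_Icc.mp (hs hjs)
      have hbaj := hba j (by omega)
      omega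
  rw [hLHSsum, Finset.sum_congr rfl hterm, ← Finset.mul_sum]
  have hTS : (∑ s ∈ A, (∏ j ∈ Finset.Icc 2 (f 0), colW u (conj f) (conj g) s j) *
        ∏ j ∈ Finset.Icc 2 (f 0), colV u (conj f) s j)
      = TS u (conj f) (conj g) (f 0) := by
    rw [TS]
    apply Finset.sum_subset (by rw [hAdef]; exact Finset.filter_subset _ _) hvanish
  rw [hTS, total hu (conj f) (conj g) (fun j hj => hanti j (j + 1) hj (by omega))
    (fun j hj => hbanti j (j + 1) hj (by omega)) hba (f 0) hJ1 haJ hbJ]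
  rw [sk]
  have hins : Finset.Icc 1 (f 0) = insert 1 (Finset.Icc 2 (f 0)) := by
    ext k
    simp only [Finset.mem_Icc, Finset.mem_insert]
    omega
  rw [hins, Finset.prod_insert (by simp [Finset.mem_Icc])]
  ring


end EK
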